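/- Let n be a natural number and let T be a computable tree over Fin n, i.e., membership in T is a decidable-by-algorithm (computable) predicate on List (Fin n). If f is an isolated infinite path of T — that is, there exists k such that f is the unique infinite path of T extending the initial segment of f of length k — then the function f : ℕ → Fin n is computable. -/

import Mathlib

/-- The initial segment (f 0, …, f (k-1)) of an infinite sequence f. -/
def initSeg {n : ℕ} (f : ℕ → Fin n) (k : ℕ) : List (Fin n) :=
  List.ofFn (fun i : Fin k => f i)

/-- A tree over `Fin n`: a set of finite strings closed under taking prefixes. -/
def IsTree {n : ℕ} (T : Set (List (Fin n))) : Prop :=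
  ∀ σ ∈ T, ∀ τ, τ <+: σ → τ ∈ T

/-- `f` is an infinite path of `T`: every initial segment of `f` belongs to `T`. -/
def IsPath {n : ℕ} (T : Set (List (Fin n))) (f : ℕ → Fin n) : Prop :=
  ∀ k : ℕ, initSeg f k ∈ T

section Aux

variable {n : ℕ}

theorem initSeg_length (f : ℕ → Fin n) (k : ℕ) : (initSeg f k).length = k := by
  simp [initSeg]

theorem initSeg_succ (f : ℕ → Fin n) (k : ℕ) :
    initSeg f (k + 1) = initSeg f k ++ [f k] := by
  rw [initSeg, List.ofFn_succ', List.concat_eq_append]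
  simp [initSeg, Fin.coe_castSucc]

theorem initSeg_prefix (f : ℕ → Fin n) {a b : ℕ} (h : a ≤ b) :
    initSeg f a <+: initSeg f b := by
  induction b, h using Nat.le_induction with
  | base => exact List.prefix_refl _
  | succ b hb ih => rw [initSeg_succ]; exact ih.trans (List.prefix_append _ _)

theorem initSeg_getElem? (f : ℕ → Fin n) {k m : ℕ} (h : m < k) :
    (initSeg f k)[m]? = some (f m) := by
  rw [initSeg, List.getElem?_eq_getElem (by simpa using h)]
  simp

theorem initSeg_getD (f : ℕ → Fin n) {k m : ℕ} (h : m < k) (d : Fin n) :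
    (initSeg f k).getD m d = f m := by
  rw [List.getD_eq_getElem?_getD, initSeg_getElem? f h]; rfl

theorem getD_eq_of_prefix {σ τ : List (Fin n)} (h : σ <+: τ) {m : ℕ} (hm : m < σ.length)
    (d : Fin n) : σ.getD m d = τ.getD m d := by
  rw [List.getD_eq_getElem?_getD, List.getD_eq_getElem?_getD,
    List.getElem?_eq_getElem hm, List.getElem?_eq_getElem (hm.trans_le h.length_le),
    h.getElem hm]

/-- König's lemma for finitely-branching trees over `Fin n`. -/
theorem konig (hn : 0 < n) (S : Set (List (Fin n)))
    (hpref : ∀ σ ∈ S, ∀ τ, τ <+: σ → τ ∈ S)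
    (hlen : ∀ L, ∃ σ ∈ S, σ.length = L) :
    ∃ g : ℕ → Fin n, ∀ L, initSeg g L ∈ S := by
  classical
  set Good : List (Fin n) → Prop :=
    fun τ => ∀ L, τ.length ≤ L → ∃ σ ∈ S, σ.length = L ∧ τ <+: σ with hGood
  have good_nil : Good [] := by
    intro L _
    obtain ⟨σ, hσ, hl⟩ := hlen L
    exact ⟨σ, hσ, hl, List.nil_prefix⟩
  have step : ∀ τ, Good τ → ∃ i : Fin n, Good (τ ++ [i]) := by
    intro τ hτ
    by_contra hno
    push_neg at hno
    -- for each i get a bad level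
    have hbad : ∀ i : Fin n, ∃ L, τ.length + 1 ≤ L ∧
        ∀ σ ∈ S, σ.length = L → ¬(τ ++ [i] <+: σ) := by
      intro i
      have h := hno i
      simp only [hGood] at h
      push_neg at h
      obtain ⟨L, hL, h2⟩ := h
      refine ⟨L, by simpa using hL, ?_⟩
      intro σ hσ hσl hpre
      exact h2 σ hσ hσl hpre
    choose B hB1 hB2 using hbad
    set M := Finset.univ.sup B with hM
    have hMτ : τ.length + 1 ≤ M := by
      obtain ⟨i⟩ : Nonempty (Fin n) := ⟨⟨0, hn⟩⟩
      exact (hB1 i).trans (Finset.le_sup (Finset.mem_univ i))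
    obtain ⟨σ, hσS, hσl, hσp⟩ := hτ M (by omega)
    -- next element of σ after τ
    have hlt : τ.length < σ.length := by omega
    obtain ⟨t, rfl⟩ := hσp
    have ht : t ≠ [] := by intro h; subst h; simp at hlt
    obtain ⟨b, t', rfl⟩ : ∃ b t', t = b :: t' := by
      cases t with
      | nil => exact absurd rfl ht
      | cons b t' => exact ⟨b, t', rfl⟩
    have hpre2 : τ ++ [b] <+: τ ++ b :: t' := by
      refine ⟨t', by simp⟩
    -- truncate to length B b
    have hBb : B b ≤ M := Finset.le_sup (Finset.mem_univ b)
    set σ' := (τ ++ b :: t').take (B b) with hσ'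
    have hσ'S : σ' ∈ S := hpref _ hσS _ (List.take_prefix _ _)
    have hσ'l : σ'.length = B b := by
      rw [hσ', List.length_take]; omega
    have hσ'p : τ ++ [b] <+: σ' := by
      rw [hσ', List.prefix_take_iff]
      exact ⟨hpre2, by simpa using hB1 b⟩
    exact hB2 b σ' hσ'S hσ'l hσ'p
  -- build the path
  let ch : ℕ → {τ : List (Fin n) // Good τ} := fun j =>
    Nat.rec ⟨[], good_nil⟩
      (fun _ p => ⟨p.1 ++ [(step p.1 p.2).choose], (step p.1 p.2).choose_spec⟩) j
  have hch_succ : ∀ j, (ch (j + 1)).1 =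
      (ch j).1 ++ [(step (ch j).1 (ch j).2).choose] := fun _ => rfl
  have hch_len : ∀ j, (ch j).1.length = j := by
    intro j
    induction j with
    | zero => rfl
    | succ j ih => rw [hch_succ]; simp [ih]
  refine ⟨fun j => (ch (j + 1)).1.getD j ⟨0, hn⟩, ?_⟩
  have key : ∀ L, initSeg (fun j => (ch (j + 1)).1.getD j ⟨0, hn⟩) L = (ch L).1 := by
    intro L
    induction L with
    | zero =>
      show initSeg _ 0 = ([] : List (Fin n))
      simp [initSeg]
    | succ L ih =>
      rw [initSeg_succ, ih, hch_succ]
      congr 1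
      have : (ch (L + 1)).1.getD L ⟨0, hn⟩ =
          ((ch L).1 ++ [(step (ch L).1 (ch L).2).choose]).getD L ⟨0, hn⟩ := by
        rw [hch_succ]
      rw [this]
      simp [List.getD_eq_getElem?_getD, List.getElem?_append_right, hch_len L]
  intro L
  rw [key]
  obtain ⟨σ, hσS, hσl, hσp⟩ := (ch L).2 L (by rw [hch_len])
  rwa [hσp.eq_of_length (by rw [hch_len, hσl])]

end Aux

section CompAux


variable {α β : Type} [Primcodable α] [Primcodable β]

theorem computable_list_all {l : α → List β} {p : α → β → Bool}
    (hl : Computable l) (hp : Computable₂ p) :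
    Computable fun a => (l a).all (p a) := by
  have step : Computable₂ fun (a : α) (q : ℕ × Bool) =>
      q.2 && ((l a)[q.1]?.elim true (p a)) := by
    have helim : Computable fun x : α × (ℕ × Bool) =>
        ((l x.1)[x.2.1]?.elim true (p x.1)) := by
      have ho : Computable fun x : α × (ℕ × Bool) => (l x.1)[x.2.1]? := by
        have := Computable.list_getElem?.comp (hl.comp (Computable.fst (β := ℕ × Bool)))
          (Computable.fst.comp (Computable.snd (α := α)))
        exact this.of_eq fun x => by simp
      exact (Computable.option_casesOn ho (Computable.const true)
        (hp.comp (Computable.fst.comp Computable.fst) Computable.snd).to₂).of_eq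
        fun x => by cases h : (l x.1)[x.2.1]? <;> simp [h]
    exact (Computable.cond (Computable.snd.comp Computable.snd) helim
      (Computable.const false)).of_eq fun x => by
        rcases x with ⟨a, j, b⟩
        cases b <;> simp
  have h1 : Computable fun a => Nat.rec (motive := fun _ => Bool) true
      (fun j IH => IH && ((l a)[j]?.elim true (p a))) ((l a).length) :=
    Computable.nat_rec (Computable.list_length.comp hl) (Computable.const true) step
  refine h1.of_eq fun a => ?_
  have key : ∀ j, Nat.rec (motive := fun _ => Bool) true
      (fun j IH => IH && ((l a)[j]?.elim true (p a))) j = ((l a).take j).all (p a) := by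
    intro j
    induction j with
    | zero => simp
    | succ j ih =>
      show ((Nat.rec (motive := fun _ => Bool) true
        (fun j IH => IH && ((l a)[j]?.elim true (p a))) j) && ((l a)[j]?.elim true (p a))) = _
      rw [ih, List.take_succ, List.all_append]
      cases h : (l a)[j]? <;> simp [h]
  rw [key, List.take_length]

theorem computable_list_find? {l : α → List β} {p : α → β → Bool}
    (hl : Computable l) (hp : Computable₂ p) :
    Computable fun a => (l a).find? (p a) := by
  have step : Computable₂ fun (a : α) (q : ℕ × Option β) =>
      (q.2 <|> ((l a)[q.1]?.bind fun x => if p a x then some x else none)) := by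
    have hbind : Computable fun x : α × (ℕ × Option β) =>
        ((l x.1)[x.2.1]?.bind fun y => if p x.1 y then some y else none) := by
      have ho : Computable fun x : α × (ℕ × Option β) => (l x.1)[x.2.1]? := by
        have := Computable.list_getElem?.comp (hl.comp (Computable.fst (β := ℕ × Option β)))
          (Computable.fst.comp (Computable.snd (α := α)))
        exact this.of_eq fun x => by simp
      refine Computable.option_bind ho ?_
      refine Computable.to₂
        (f := fun y : (α × (ℕ × Option β)) × β => if p y.1.1 y.2 then some y.2 else none) ?_
      have hcond : Computable fun y : (α × (ℕ × Option β)) × β =>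
          cond (p y.1.1 y.2) (some y.2) none :=
        Computable.cond (hp.comp (Computable.fst.comp Computable.fst) Computable.snd)
          (Computable.option_some.comp Computable.snd) (Computable.const none)
      exact hcond.of_eq fun y => by cases h : p y.1.1 y.2 <;> simp [h]
    exact Primrec.option_orElse.to_comp.comp (Computable.snd.comp Computable.snd) hbind
  have h1 : Computable fun a => Nat.rec (motive := fun _ => Option β) none
      (fun j IH => (IH <|> ((l a)[j]?.bind fun x => if p a x then some x else none)))
      ((l a).length) :=
    Computable.nat_rec (Computable.list_length.comp hl) (Computable.const none) step
  refine h1.of_eq fun a => ?_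
  have key : ∀ j, Nat.rec (motive := fun _ => Option β) none
      (fun j IH => (IH <|> ((l a)[j]?.bind fun x => if p a x then some x else none))) j
      = ((l a).take j).find? (p a) := by
    intro j
    induction j with
    | zero => simp
    | succ j ih =>
      show ((Nat.rec (motive := fun _ => Option β) none
        (fun j IH => (IH <|> ((l a)[j]?.bind fun x => if p a x then some x else none))) j)
          <|> ((l a)[j]?.bind fun x => if p a x then some x else none)) = _
      rw [ih, List.take_succ, List.find?_append]
      cases h : (l a)[j]? with
      | none => simp
      | some x =>
        simp only [Option.toList_some]
        cases hf : ((l a).take j).find? (p a) <;>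
          cases hp : p a x <;>
            simp [List.find?, hp, hf, Option.or]
  rw [key, List.take_length]

end CompAux


/-- All strings of length `δ.length + j` extending `δ`. -/
def extL {n : ℕ} (δ : List (Fin n)) : ℕ → List (List (Fin n)) := fun j =>
  Nat.rec [δ] (fun _ IH => IH.flatMap fun σ => (List.finRange n).map fun i => σ ++ [i]) j

theorem mem_extL {n : ℕ} {δ σ : List (Fin n)} {j : ℕ} :
    σ ∈ extL δ j ↔ δ <+: σ ∧ σ.length = δ.length + j := by
  induction j generalizing σ with
  | zero =>
    constructor
    · rintro h
      rcases List.mem_singleton.1 h with rfl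
      exact ⟨List.prefix_refl _, rfl⟩
    · rintro ⟨h1, h2⟩
      have := h1.eq_of_length (by omega)
      simp [extL, this]
  | succ j ih =>
    constructor
    · intro h
      obtain ⟨τ, hτ, hσ⟩ := List.mem_flatMap.1 h
      obtain ⟨i, _, rfl⟩ := List.mem_map.1 hσ
      obtain ⟨h1, h2⟩ := ih.1 hτ
      exact ⟨h1.trans (List.prefix_append _ _), by simp [h2]; omega⟩
    · rintro ⟨h1, h2⟩
      obtain rfl | ⟨τ, i, rfl⟩ : σ = [] ∨ ∃ τ i, σ = τ ++ [i] := by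
        rcases List.eq_nil_or_concat σ with h | ⟨τ, i, h⟩
        · exact Or.inl h
        · exact Or.inr ⟨τ, i, by simpa [List.concat_eq_append] using h⟩
      · simp at h2
      · refine List.mem_flatMap.2 ⟨τ, ih.2 ⟨?_, by simp at h2 ⊢; omega⟩, ?_⟩
        · rcases h1 with ⟨t, ht⟩
          have hlen : δ.length ≤ τ.length := by simp at h2 ⊢; omega
          have : δ <+: τ ++ [i] := ⟨t, ht⟩
          exact (List.prefix_take_iff.2 ⟨this, hlen⟩).trans
            (by rw [List.take_left']; simp)
        · exact List.mem_map.2 ⟨i, List.mem_finRange i, rfl⟩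

theorem computable_extL {n : ℕ} (δ : List (Fin n)) : Computable (extL δ) := by
  have hstep : Computable₂ fun (_ : ℕ) (q : ℕ × List (List (Fin n))) =>
      q.2.flatMap fun σ => (List.finRange n).map fun i => σ ++ [i] := by
    have : Primrec fun q : ℕ × (ℕ × List (List (Fin n))) =>
        q.2.2.flatMap fun σ => (List.finRange n).map fun i => σ ++ [i] := by
      refine Primrec.list_flatMap (Primrec.snd.comp Primrec.snd) ?_
      exact (Primrec.list_map (Primrec.const (List.finRange n))
        (Primrec.list_concat.comp (Primrec.snd.comp Primrec.fst) Primrec.snd).to₂).to₂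
    exact this.to_comp.to₂
  have := Computable.nat_rec Computable.id (Computable.const [δ]) hstep
  exact this.of_eq fun j => by
    induction j with
    | zero => rfl
    | succ j ih =>
      show (Nat.rec (motive := fun _ => List (List (Fin n))) [δ] (fun y IH =>
        (y, IH).2.flatMap fun σ => List.map (fun i => σ ++ [i]) (List.finRange n)) (id j)).flatMap
          (fun σ => List.map (fun i => σ ++ [i]) (List.finRange n)) = _
      rw [ih]
      rfl


set_option maxHeartbeats 1000000 in
/-- An isolated infinite path of a computable tree is a computable function. -/
theorem isolated_path_computable {n : ℕ} (T : Set (List (Fin n))) (hT : IsTree T)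
    (hTcomp : ComputablePred (· ∈ T)) (f : ℕ → Fin n) (hf : IsPath T f)
    (hiso : ∃ k : ℕ, ∀ g : ℕ → Fin n, IsPath T g → initSeg g k = initSeg f k → g = f) :
    Computable f := by
  classical
  obtain ⟨k, hk⟩ := hiso
  have hn : 0 < n := (f 0).pos
  obtain ⟨d⟩ : Nonempty (Fin n) := ⟨f 0⟩
  obtain ⟨δ, hδ⟩ : ∃ δ : List (Fin n), δ = initSeg f k := ⟨_, rfl⟩
  have hδlen : δ.length = k := by rw [hδ, initSeg_length]
  obtain ⟨c, hc, hcT⟩ := ComputablePred.computable_iff.1 hTcomp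
  have hmem : ∀ σ : List (Fin n), σ ∈ T ↔ c σ = true := fun σ => iff_of_eq (congrFun hcT σ)
  -- Step 1: there are levels where membership determines `f m`
  have exlev : ∀ m, ∃ L, m < L ∧ k ≤ L ∧
      ∀ σ ∈ T, σ.length = L → δ <+: σ → σ.getD m d = f m := by
    intro m
    by_contra hcon
    push_neg at hcon
    have hpig : ∃ i : Fin n, i ≠ f m ∧ ∀ L₀, ∃ L, L₀ ≤ L ∧
        ∃ σ ∈ T, σ.length = L ∧ δ <+: σ ∧ m < σ.length ∧ σ.getD m d = i := by
      by_contra hno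
      push_neg at hno
      have hB : ∀ i : Fin n, ∃ L₀, i ≠ f m → ∀ L, L₀ ≤ L →
          ∀ σ ∈ T, σ.length = L → δ <+: σ → m < σ.length → σ.getD m d ≠ i := by
        intro i
        by_cases hi : i = f m
        · exact ⟨0, fun h => absurd hi h⟩
        · obtain ⟨L₀, hL₀⟩ := hno i hi
          exact ⟨L₀, fun _ => hL₀⟩
      choose B hB using hB
      obtain ⟨σ, hσT, hσl, hσp, hσv⟩ :=
        hcon (Finset.univ.sup B + m + k + 1) (by omega) (by omega)
      exact hB (σ.getD m d) hσv _
        (le_trans (Finset.le_sup (Finset.mem_univ _)) (by omega))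
        σ hσT hσl hσp (by omega) rfl
    obtain ⟨i, hif, hP⟩ := hpig
    set S : Set (List (Fin n)) :=
      {τ | τ ∈ T ∧ (τ <+: δ ∨ δ <+: τ) ∧ (τ.length ≤ m ∨ τ.getD m d = i)} with hS
    have hSpref : ∀ σ ∈ S, ∀ τ, τ <+: σ → τ ∈ S := by
      rintro σ ⟨hσT, hσc, hσv⟩ τ hτ
      refine ⟨hT σ hσT τ hτ, ?_, ?_⟩
      · rcases hσc with h | h
        · exact Or.inl (hτ.trans h)
        · rcases le_or_gt τ.length δ.length with hl | hl
          · exact Or.inl (List.prefix_of_prefix_length_le hτ h hl)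
          · exact Or.inr (List.prefix_of_prefix_length_le h hτ hl.le)
      · rcases le_or_gt τ.length m with hl | hl
        · exact Or.inl hl
        · refine Or.inr ?_
          rw [getD_eq_of_prefix hτ hl d]
          rcases hσv with h | h
          · have := hτ.length_le; omega
          · exact h
    have hSlen : ∀ L, ∃ σ ∈ S, σ.length = L := by
      intro L
      obtain ⟨L', hL', σ, hσT, hσl, hσp, hσm, hσv⟩ := hP (max L (max (m + 1) k))
      have hσS : σ ∈ S := ⟨hσT, Or.inr hσp, Or.inr hσv⟩
      refine ⟨σ.take L, hSpref σ hσS _ (List.take_prefix _ _), ?_⟩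
      rw [List.length_take]
      have := le_max_left L (max (m + 1) k)
      omega
    obtain ⟨g, hg⟩ := konig hn S hSpref hSlen
    have hgpath : IsPath T g := fun L => (hg L).1
    have hgk : initSeg g k = initSeg f k := by
      rw [← hδ]
      rcases (hg k).2.1 with h | h
      · exact h.eq_of_length (by rw [initSeg_length, hδlen])
      · exact (h.eq_of_length (by rw [hδlen, initSeg_length])).symm
    have hgf : g = f := hk g hgpath hgk
    have hval : (initSeg g (m + 1)).getD m d = i := by
      rcases (hg (m + 1)).2.2 with h | h
      · rw [initSeg_length] at h; omega
      · exact h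
    rw [initSeg_getD g (Nat.lt_succ_self m) d, hgf] at hval
    exact hif hval.symm
  -- Step 2: the algorithm
  obtain ⟨check, hcheckdef⟩ : ∃ ch : ℕ → ℕ → Option (Fin n), ch = fun m j =>
      if m < k + j then
        ((extL δ j).find? c).bind fun σ =>
          if (extL δ j).all (fun τ => !(c τ) || (τ.getD m d == σ.getD m d)) then
            some (σ.getD m d)
          else none
      else none := ⟨_, rfl⟩
  have hcheckcomp : Computable₂ check := by
    rw [hcheckdef]
    have hext : Computable fun q : ℕ × ℕ => extL δ q.2 :=
      (computable_extL δ).comp Computable.snd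
    have hcp : Computable₂ fun (_ : ℕ × ℕ) (σ : List (Fin n)) => c σ :=
      hc.comp (Computable.snd (α := ℕ × ℕ) (β := List (Fin n)))
    have hfind : Computable fun q : ℕ × ℕ => (extL δ q.2).find? c :=
      computable_list_find? hext hcp
    have hgetσ : Computable fun x : (ℕ × ℕ) × List (Fin n) => x.2.getD x.1.1 d :=
      (Primrec.list_getD d).to_comp.comp Computable.snd
        (Computable.fst.comp Computable.fst)
    have hbeq : Computable fun y : ((ℕ × ℕ) × List (Fin n)) × List (Fin n) =>
        (y.2.getD y.1.1.1 d == y.1.2.getD y.1.1.1 d) :=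
      Primrec.beq.to_comp.comp
        ((Primrec.list_getD d).to_comp.comp Computable.snd
          (Computable.fst.comp (Computable.fst.comp Computable.fst)))
        ((Primrec.list_getD d).to_comp.comp (Computable.snd.comp Computable.fst)
          (Computable.fst.comp (Computable.fst.comp Computable.fst)))
    have hp : Computable₂ fun (x : (ℕ × ℕ) × List (Fin n)) (τ : List (Fin n)) =>
        !(c τ) || (τ.getD x.1.1 d == x.2.getD x.1.1 d) := by
      have hp' : Computable fun y : ((ℕ × ℕ) × List (Fin n)) × List (Fin n) =>
          !(c y.2) || (y.2.getD y.1.1.1 d == y.1.2.getD y.1.1.1 d) :=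
        (Computable.cond (hc.comp Computable.snd) hbeq
          (Computable.const true)).of_eq fun y => by cases h : c y.2 <;> simp [h]
      exact hp'
    have hall : Computable fun x : (ℕ × ℕ) × List (Fin n) =>
        (extL δ x.1.2).all (fun τ => !(c τ) || (τ.getD x.1.1 d == x.2.getD x.1.1 d)) :=
      computable_list_all ((computable_extL δ).comp (Computable.snd.comp Computable.fst)) hp
    have hinner : Computable₂ fun (q : ℕ × ℕ) (σ : List (Fin n)) =>
        if (extL δ q.2).all (fun τ => !(c τ) || (τ.getD q.1 d == σ.getD q.1 d)) then
          some (σ.getD q.1 d)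
        else none := by
      have hinner' : Computable fun x : (ℕ × ℕ) × List (Fin n) =>
          if (extL δ x.1.2).all (fun τ => !(c τ) || (τ.getD x.1.1 d == x.2.getD x.1.1 d)) then
            some (x.2.getD x.1.1 d)
          else none :=
        (Computable.cond hall (Computable.option_some.comp hgetσ)
          (Computable.const none)).of_eq fun x => by
            by_cases h : (extL δ x.1.2).all
                (fun τ => !(c τ) || (τ.getD x.1.1 d == x.2.getD x.1.1 d)) = true <;>
              simp [h]
      exact hinner'
    have hbind : Computable fun q : ℕ × ℕ =>
        ((extL δ q.2).find? c).bind fun σ =>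
          if (extL δ q.2).all (fun τ => !(c τ) || (τ.getD q.1 d == σ.getD q.1 d)) then
            some (σ.getD q.1 d)
          else none :=
      Computable.option_bind hfind hinner
    have hlt : Computable fun q : ℕ × ℕ => decide (q.1 < k + q.2) :=
      (Primrec.nat_lt.comp Primrec.fst
        (Primrec.nat_add.comp (Primrec.const k) Primrec.snd)).decide.to_comp
    have hmain' : Computable fun q : ℕ × ℕ =>
        if q.1 < k + q.2 then
          ((extL δ q.2).find? c).bind fun σ =>
            if (extL δ q.2).all (fun τ => !(c τ) || (τ.getD q.1 d == σ.getD q.1 d)) then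
              some (σ.getD q.1 d)
            else none
        else none :=
      (Computable.cond hlt hbind (Computable.const none)).of_eq fun q => by
        by_cases h : q.1 < k + q.2 <;> simp [h]
    exact hmain'
  -- Step 3: correctness
  have hmain : ∀ m, f m ∈ Nat.rfindOpt (check m) := by
    intro m
    have hsound : ∀ j a, check m j = some a → a = f m := by
      intro j a ha
      rw [hcheckdef] at ha
      simp only at ha
      by_cases hmj : m < k + j
      swap
      · rw [if_neg hmj] at ha; exact absurd ha (by simp)
      rw [if_pos hmj] at ha
      cases hfind : (extL δ j).find? c with
      | none => rw [hfind] at ha; exact absurd ha (by simp)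
      | some σ =>
        rw [hfind] at ha
        simp only [Option.bind_some] at ha
        by_cases hall : (extL δ j).all
            (fun τ => !(c τ) || (τ.getD m d == σ.getD m d)) = true
        swap
        · rw [if_neg hall] at ha; exact absurd ha (by simp)
        rw [if_pos hall] at ha
        have hw : initSeg f (k + j) ∈ extL δ j :=
          mem_extL.2 ⟨by rw [hδ]; exact initSeg_prefix f (Nat.le_add_right k j),
            by rw [initSeg_length, hδlen]⟩
        have hcw : c (initSeg f (k + j)) = true := (hmem _).1 (hf (k + j))
        have hwall := List.all_eq_true.1 hall _ hw
        rw [hcw] at hwall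
        simp only [Bool.not_true, Bool.false_or, beq_iff_eq] at hwall
        rw [initSeg_getD f hmj d] at hwall
        rw [← Option.some_inj.1 ha, ← hwall]
    obtain ⟨L, hmL, hkL, hdet⟩ := exlev m
    obtain ⟨j, hkj⟩ : ∃ j, k + j = L := ⟨L - k, by omega⟩
    have hwmem : initSeg f L ∈ extL δ j :=
      mem_extL.2 ⟨by rw [hδ]; exact initSeg_prefix f hkL,
        by rw [initSeg_length, hδlen]; omega⟩
    have hwc : c (initSeg f L) = true := (hmem _).1 (hf L)
    have hfindsome : ((extL δ j).find? c).isSome :=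
      List.find?_isSome.2 ⟨_, hwmem, hwc⟩
    obtain ⟨σ, hfind⟩ := Option.isSome_iff_exists.1 hfindsome
    have hσc := List.find?_some hfind
    obtain ⟨hσp, hσl⟩ := mem_extL.1 (List.mem_of_find?_eq_some hfind)
    have hσval : σ.getD m d = f m :=
      hdet σ ((hmem σ).2 hσc) (by omega) hσp
    have hall : (extL δ j).all (fun τ => !(c τ) || (τ.getD m d == σ.getD m d)) = true := by
      rw [List.all_eq_true]
      intro τ hτ
      by_cases hcτ : c τ = true
      · obtain ⟨hτp, hτl⟩ := mem_extL.1 hτ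
        have := hdet τ ((hmem τ).2 hcτ) (by omega) hτp
        simp only [hcτ, Bool.not_true, Bool.false_or, beq_iff_eq]
        rw [this, hσval]
      · have h0 : c τ = false := by simpa using hcτ
        simp [h0]
    have hsome : check m j = some (f m) := by
      rw [hcheckdef]
      simp only
      rw [if_pos (by omega), hfind]
      simp only [Option.bind_some]
      rw [if_pos hall, hσval]
    have hdom : (Nat.rfindOpt (check m)).Dom :=
      Nat.rfindOpt_dom.2 ⟨j, f m, hsome⟩
    obtain ⟨j', hj'⟩ := Nat.rfindOpt_spec (Part.get_mem hdom)
    have := hsound j' _ hj'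
    rw [← this]
    exact Part.get_mem hdom
  exact Partrec.of_eq_tot (Partrec.rfindOpt hcheckcomp) hmain
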